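/- Let s_0, s_1, s_2 be the 3-hyperbolic functions. Then for all z ∈ ℂ: s_0(3z) = 1 + 9 s_0(z) s_1(z) s_2(z). -/
import Mathlib


open Complex Finset

noncomputable def zeta3 : ℂ := Complex.exp (2 * Real.pi * Complex.I / 3)

noncomputable def s3 (k : ℕ) (z : ℂ) : ℂ :=
  (1 / 3) * ∑ m ∈ Finset.range 3, ((zeta3 ^ m)⁻¹) ^ k * Complex.exp (z * zeta3 ^ m)

theorem s3_triple_argument (z : ℂ) :
    s3 0 (3 * z) = 1 + 9 * s3 0 z * s3 1 z * s3 2 z := by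
  have hprim : IsPrimitiveRoot zeta3 3 := Complex.isPrimitiveRoot_exp 3 (by norm_num)
  have hζ3 : zeta3 ^ 3 = 1 := hprim.pow_eq_one
  have hne : zeta3 ≠ 0 := Complex.exp_ne_zero _
  have hne1 : zeta3 ≠ 1 := hprim.ne_one (by norm_num)
  have hsum : 1 + zeta3 + zeta3 ^ 2 = 0 := by
    have h : (zeta3 - 1) * (1 + zeta3 + zeta3 ^ 2) = 0 := by
      linear_combination hζ3
    rcases mul_eq_zero.mp h with h1 | h2
    · exact absurd (sub_eq_zero.mp h1) hne1
    · exact h2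
  have hinv1 : zeta3⁻¹ = zeta3 ^ 2 :=
    inv_eq_of_mul_eq_one_right (by linear_combination hζ3)
  have hinv2 : (zeta3 ^ 2)⁻¹ = zeta3 := by
    rw [← hinv1, inv_inv]
  set A := Complex.exp z with hA
  set B := Complex.exp (z * zeta3) with hB
  set C := Complex.exp (z * zeta3 ^ 2) with hC
  have hABC : A * B * C = 1 := by
    rw [hA, hB, hC, ← Complex.exp_add, ← Complex.exp_add]
    have h : z + z * zeta3 + z * zeta3 ^ 2 = z * (1 + zeta3 + zeta3 ^ 2) := by ring
    rw [h, hsum, mul_zero, Complex.exp_zero]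
  have e1 : Complex.exp (3 * z) = A ^ 3 := by
    rw [hA, ← Complex.exp_nat_mul]; norm_num
  have e2 : Complex.exp (3 * z * zeta3) = B ^ 3 := by
    rw [hB, ← Complex.exp_nat_mul]; ring_nf
  have e3 : Complex.exp (3 * z * zeta3 ^ 2) = C ^ 3 := by
    rw [hC, ← Complex.exp_nat_mul]; ring_nf
  simp only [s3, Finset.sum_range_succ, Finset.sum_range_zero, pow_zero, pow_one,
    zero_add, one_mul, mul_one, inv_one, one_pow, hinv1, hinv2, e1, e2, e3, ← hA, ← hB, ← hC]
  linear_combination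
    (-(1/3 : ℂ) * (B^3*zeta3^3 + B^3 + C^3 + A^2*B*zeta3 + A*B^2*(zeta3^3+zeta3+1) +
      A*B*C*(zeta3^2+2*zeta3) + A*C^2 + B^2*C*(zeta3^3+zeta3^2+zeta3+1) +
      B*C^2*(zeta3^2+zeta3+1))) * hζ3 +
    (-(1/3 : ℂ) * (A^2*B + A^2*C + A*B^2 + A*C^2 + B^2*C + B*C^2) - A*B*C) * hsum + hABC
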